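/- For A ∈ ℝ and B ≥ 0, define E[f] = (1/π) ∫₀^π f(θ) φ₁(A + B cos θ) dθ for continuous f : [0,π] → ℝ. Then E[1]·E[cos²θ] − (E[cos θ])² > 0; consequently the Jacobian determinant of the map (A,B) ↦ ( 𝓘₀²(A,B), 𝓘₁²(A,B) ), whose Jacobian matrix has entries ∂_A𝓘₀² = E[1], ∂_B𝓘₀² = ∂_A𝓘₁² = E[cos θ], ∂_B𝓘₁² = E[cos²θ], is strictly positive. -/

import Mathlib

open MeasureTheory Set

/-- The Fermi integral of order `s`: `φ_s(x) = (1/Γ(s)) ∫₀^∞ t^{s-1}/(e^{t-x}+1) dt`. -/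
noncomputable def fermi (s x : ℝ) : ℝ :=
  (1 / Real.Gamma s) * ∫ t in Set.Ioi (0 : ℝ), t ^ (s - 1) / (Real.exp (t - x) + 1)

/-- `𝓘_N^s(A,B) = (1/π) ∫₀^π cos(Nθ) φ_s(A + B cos θ) dθ`. -/
noncomputable def calI (N : ℕ) (s A B : ℝ) : ℝ :=
  (1 / Real.pi) * ∫ θ in (0 : ℝ)..Real.pi, Real.cos (N * θ) * fermi s (A + B * Real.cos θ)

/-- `E[f] = (1/π) ∫₀^π f(θ) φ₁(A + B cos θ) dθ`. -/
noncomputable def Efun (A B : ℝ) (f : ℝ → ℝ) : ℝ :=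
  (1 / Real.pi) * ∫ θ in (0 : ℝ)..Real.pi, f θ * fermi 1 (A + B * Real.cos θ)

/-- `φ₁(x) = log (1 + eˣ)`. -/
lemma fermi_one (x : ℝ) : fermi 1 x = Real.log (1 + Real.exp x) := by
  have key : ∫ t in Set.Ioi (0:ℝ), (1:ℝ) / (Real.exp (t - x) + 1)
      = Real.log (1 + Real.exp x) := by
    have hderiv : ∀ t ∈ Set.Ici (0:ℝ),
        HasDerivAt (fun t => -Real.log (1 + Real.exp (x - t)))
          (1 / (Real.exp (t - x) + 1)) t := by
      intro t _
      have h1 : HasDerivAt (fun t : ℝ => x - t) (-1) t := by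
        simpa using (hasDerivAt_id t).const_sub x
      have h2 : HasDerivAt (fun t : ℝ => Real.exp (x - t)) (Real.exp (x - t) * (-1)) t :=
        (Real.hasDerivAt_exp _).comp t h1
      have h3 : HasDerivAt (fun t : ℝ => 1 + Real.exp (x - t)) (Real.exp (x - t) * (-1)) t :=
        h2.const_add 1
      have hpos : (0:ℝ) < 1 + Real.exp (x - t) := by positivity
      have h4 : HasDerivAt (fun t => -Real.log (1 + Real.exp (x - t))) _ t := (h3.log hpos.ne').neg
      convert h4 using 1
      have hmul : Real.exp (t - x) * Real.exp (x - t) = 1 := by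
        rw [← Real.exp_add]; simp
      have hp2 : (0:ℝ) < Real.exp (t - x) + 1 := by positivity
      field_simp
      nlinarith [hmul]
    have hnn : ∀ t ∈ Set.Ioi (0:ℝ), (0:ℝ) ≤ 1 / (Real.exp (t - x) + 1) := by
      intro t _; positivity
    have htend : Filter.Tendsto (fun t => -Real.log (1 + Real.exp (x - t)))
        Filter.atTop (nhds 0) := by
      have : Filter.Tendsto (fun t : ℝ => x - t) Filter.atTop Filter.atBot :=
        Filter.tendsto_atBot_add_const_left _ x Filter.tendsto_neg_atTop_atBot |>.congr
          (fun t => by ring)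
      have := (Real.tendsto_exp_atBot.comp this)
      have h2 : Filter.Tendsto (fun t : ℝ => 1 + Real.exp (x - t)) Filter.atTop (nhds 1) := by
        simpa using (this.const_add 1)
      have := (Real.continuousAt_log (by norm_num : (1:ℝ) ≠ 0)).tendsto.comp h2
      simpa using this.neg
    have := integral_Ioi_of_hasDerivAt_of_nonneg' hderiv hnn htend
    rw [this]
    simp
  simp only [fermi, Real.Gamma_one, sub_self]
  rw [show (∫ t in Set.Ioi (0:ℝ), t ^ (0:ℝ) / (Real.exp (t - x) + 1))
      = ∫ t in Set.Ioi (0:ℝ), 1 / (Real.exp (t - x) + 1) from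
    setIntegral_congr_fun measurableSet_Ioi (fun t _ => by rw [Real.rpow_zero]), key]
  ring

/-- The weight function `w(θ) = φ₁(A + B cos θ)` written explicitly. -/
noncomputable def w (A B θ : ℝ) : ℝ := Real.log (1 + Real.exp (A + B * Real.cos θ))

lemma w_cont (A B : ℝ) : Continuous (w A B) := by
  apply Continuous.log
  · continuity
  · intro θ; positivity

lemma w_pos (A B θ : ℝ) : 0 < w A B θ :=
  Real.log_pos (by have := Real.exp_pos (A + B * Real.cos θ); linarith)

lemma S0_pos (A B : ℝ) : 0 < ∫ θ in (0:ℝ)..Real.pi, w A B θ := by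
  have := intervalIntegral.integral_lt_integral_of_continuousOn_of_le_of_exists_lt
    Real.pi_pos (continuousOn_const (c := (0:ℝ))) (w_cont A B).continuousOn
    (fun x _ => (w_pos A B x).le) ⟨0, ⟨le_refl 0, Real.pi_pos.le⟩, w_pos A B 0⟩
  simpa using this

lemma CS_strict (A B : ℝ) :
    (∫ θ in (0:ℝ)..Real.pi, Real.cos θ * w A B θ) ^ 2
      < (∫ θ in (0:ℝ)..Real.pi, w A B θ) *
        (∫ θ in (0:ℝ)..Real.pi, Real.cos θ ^ 2 * w A B θ) := by
  set S0 := ∫ θ in (0:ℝ)..Real.pi, w A B θ with hS0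
  set S1 := ∫ θ in (0:ℝ)..Real.pi, Real.cos θ * w A B θ with hS1
  set S2 := ∫ θ in (0:ℝ)..Real.pi, Real.cos θ ^ 2 * w A B θ with hS2
  have h0 : 0 < S0 := S0_pos A B
  have hcont : ContinuousOn (fun θ => (S0 * Real.cos θ - S1) ^ 2 * w A B θ)
      (Icc 0 Real.pi) := by
    apply Continuous.continuousOn
    exact (by continuity : Continuous fun θ => (S0 * Real.cos θ - S1)^2).mul (w_cont A B)
  have hne : S0 * Real.cos 0 - S1 ≠ 0 ∨ S0 * Real.cos Real.pi - S1 ≠ 0 := by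
    by_contra h
    push_neg at h
    rw [Real.cos_zero, Real.cos_pi] at h
    obtain ⟨h1, h2⟩ := h
    rw [sub_eq_zero] at h1 h2
    nlinarith
  have hQpos : 0 < ∫ θ in (0:ℝ)..Real.pi, (S0 * Real.cos θ - S1) ^ 2 * w A B θ := by
    have hpt : ∃ c ∈ Icc (0:ℝ) Real.pi, (0:ℝ) < (S0 * Real.cos c - S1) ^ 2 * w A B c := by
      rcases hne with h | h
      · exact ⟨0, ⟨le_refl 0, Real.pi_pos.le⟩,
          mul_pos (sq_pos_of_ne_zero h) (w_pos A B 0)⟩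
      · exact ⟨Real.pi, ⟨Real.pi_pos.le, le_refl _⟩,
          mul_pos (sq_pos_of_ne_zero h) (w_pos A B Real.pi)⟩
    have := intervalIntegral.integral_lt_integral_of_continuousOn_of_le_of_exists_lt
      Real.pi_pos (continuousOn_const (c := (0:ℝ))) hcont
      (fun x _ => mul_nonneg (sq_nonneg _) (w_pos A B x).le) hpt
    simpa using this
  have hexp : (∫ θ in (0:ℝ)..Real.pi, (S0 * Real.cos θ - S1) ^ 2 * w A B θ)
      = S0^2 * S2 - 2 * S0 * S1 * S1 + S1^2 * S0 := by
    have i2 : IntervalIntegrable (fun θ => Real.cos θ ^ 2 * w A B θ) volume 0 Real.pi :=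
      ((by continuity : Continuous fun θ => Real.cos θ ^ 2).mul (w_cont A B)).intervalIntegrable _ _
    have i1 : IntervalIntegrable (fun θ => Real.cos θ * w A B θ) volume 0 Real.pi :=
      (Real.continuous_cos.mul (w_cont A B)).intervalIntegrable _ _
    have i0 : IntervalIntegrable (w A B) volume 0 Real.pi :=
      (w_cont A B).intervalIntegrable _ _
    have : (fun θ => (S0 * Real.cos θ - S1) ^ 2 * w A B θ)
        = fun θ => S0^2 * (Real.cos θ ^ 2 * w A B θ)
            - (2 * S0 * S1) * (Real.cos θ * w A B θ) + S1^2 * w A B θ := by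
      funext θ; ring
    rw [this, intervalIntegral.integral_add (((i2.const_mul _).sub (i1.const_mul _)))
        (i0.const_mul _), intervalIntegral.integral_sub (i2.const_mul _) (i1.const_mul _),
      intervalIntegral.integral_const_mul, intervalIntegral.integral_const_mul,
      intervalIntegral.integral_const_mul]
  rw [hexp] at hQpos
  nlinarith

/-- `E[1]·E[cos²θ] - (E[cos θ])² > 0`; consequently the Jacobian determinant of the
map `(A,B) ↦ (𝓘₀², 𝓘₁²)`, whose Jacobian matrix is
`!![E[1], E[cos θ]; E[cos θ], E[cos²θ]]`, is strictly positive. -/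
theorem jacobian_det_pos (A B : ℝ) (hB : 0 ≤ B) :
    0 < Efun A B (fun _ => 1) * Efun A B (fun θ => Real.cos θ ^ 2)
        - (Efun A B (fun θ => Real.cos θ)) ^ 2 ∧
    0 < (!![Efun A B (fun _ => 1), Efun A B (fun θ => Real.cos θ);
            Efun A B (fun θ => Real.cos θ), Efun A B (fun θ => Real.cos θ ^ 2)]).det := by
  have hE0 : Efun A B (fun _ => 1) = (1 / Real.pi) * ∫ θ in (0:ℝ)..Real.pi, w A B θ := by
    simp only [Efun, fermi_one, w, one_mul]
  have hE1 : Efun A B (fun θ => Real.cos θ)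
      = (1 / Real.pi) * ∫ θ in (0:ℝ)..Real.pi, Real.cos θ * w A B θ := by
    simp only [Efun, fermi_one, w]
  have hE2 : Efun A B (fun θ => Real.cos θ ^ 2)
      = (1 / Real.pi) * ∫ θ in (0:ℝ)..Real.pi, Real.cos θ ^ 2 * w A B θ := by
    simp only [Efun, fermi_one, w]
  have hcs := CS_strict A B
  have hpi : (0:ℝ) < Real.pi := Real.pi_pos
  have key : 0 < Efun A B (fun _ => 1) * Efun A B (fun θ => Real.cos θ ^ 2)
      - (Efun A B (fun θ => Real.cos θ)) ^ 2 := by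
    rw [hE0, hE1, hE2]
    have h2 : (0:ℝ) < (1 / Real.pi) ^ 2 := by positivity
    calc (0:ℝ) < (1 / Real.pi)^2 * ((∫ θ in (0:ℝ)..Real.pi, w A B θ) *
          (∫ θ in (0:ℝ)..Real.pi, Real.cos θ ^ 2 * w A B θ)
          - (∫ θ in (0:ℝ)..Real.pi, Real.cos θ * w A B θ) ^ 2) := by
            apply mul_pos h2; linarith
      _ = _ := by ring
  refine ⟨key, ?_⟩
  rw [Matrix.det_fin_two_of]
  nlinarith [key]
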